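/- Under the assumptions on w (and additionally α_w = inf w'/w > 0, ensuring exponential decay), the map δ_∞ : H_w → U, h ↦ lim_{t→∞} h(t), is a bounded linear operator with operator norm (in the ‖·‖_w norm) equal to ‖δ_x‖_op in the limit, i.e. ‖δ_∞‖²_op = 1 + ∫₀^∞ w(s)⁻¹ ds; moreover δ_∞ is the pointwise limit of the evaluation operators δ_t as t → ∞. -/

import Mathlib

open MeasureTheory Set Filter Real

/-- Membership in the weighted space `H_w`. -/
def MemHw {E : Type*} [NormedAddCommGroup E] [NormedSpace ℝ E]
    (w : ℝ → ℝ) (f f' : ℝ → E) : Prop :=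
  (∀ y ∈ Ici (0:ℝ), IntervalIntegrable f' volume 0 y) ∧
  (∀ y ∈ Ici (0:ℝ), f y = f 0 + ∫ s in (0:ℝ)..y, f' s) ∧
  IntegrableOn (fun y => w y * ‖f' y‖ ^ 2) (Ioi 0)

lemma aux_int {U : Type*} [NormedAddCommGroup U] [NormedSpace ℝ U]
    (w : ℝ → ℝ) (hw_ge1 : ∀ x ∈ Ici (0:ℝ), 1 ≤ w x)
    (hw_inv : IntegrableOn (fun s => (w s)⁻¹) (Ioi 0))
    (f f' : ℝ → U) (hf : MemHw w f f') : IntegrableOn f' (Ioi 0) := by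
  obtain ⟨h1, h2, h3⟩ := hf
  set g : ℝ → ℝ := fun x => ((w x)⁻¹ + w x * ‖f' x‖ ^ 2) / 2 with hg
  have hgint : IntegrableOn g (Ioi 0) := (hw_inv.add h3).div_const 2
  have hgnn : ∀ x ∈ Ioi (0:ℝ), 0 ≤ g x := by
    intro x hx
    have hw1 : (1:ℝ) ≤ w x := hw_ge1 x (mem_Ici.2 (le_of_lt (mem_Ioi.1 hx)))
    have : (0:ℝ) < w x := lt_of_lt_of_le one_pos hw1
    positivity
  have hbd : ∀ x ∈ Ioi (0:ℝ), ‖f' x‖ ≤ g x := by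
    intro x hx
    have hw1 : (1:ℝ) ≤ w x := hw_ge1 x (mem_Ici.2 (le_of_lt (mem_Ioi.1 hx)))
    have hwpos : (0:ℝ) < w x := lt_of_lt_of_le one_pos hw1
    have hinv : w x * (w x)⁻¹ = 1 := mul_inv_cancel₀ (ne_of_gt hwpos)
    have h := sq_nonneg (w x * ‖f' x‖ - 1)
    have hv : (0:ℝ) ≤ ‖f' x‖ := norm_nonneg _
    rw [hg]
    rw [le_div_iff₀ (by norm_num : (0:ℝ) < 2), ← sub_nonneg]
    have key : (w x)⁻¹ + w x * ‖f' x‖ ^ 2 - ‖f' x‖ * 2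
        = (w x)⁻¹ * (w x * ‖f' x‖ - 1) ^ 2 := by
      field_simp
      ring
    rw [key]
    positivity
  apply integrableOn_Ioi_of_intervalIntegral_norm_bounded (∫ x in Ioi (0:ℝ), g x) 0
    (fun n : ℕ => (intervalIntegrable_iff_integrableOn_Ioc_of_le (by positivity : (0:ℝ) ≤ (n:ℝ))).1
      (h1 n (mem_Ici.2 (Nat.cast_nonneg n)))) tendsto_natCast_atTop_atTop
  filter_upwards with n
  rw [intervalIntegral.integral_of_le (by positivity : (0:ℝ) ≤ (n:ℝ))]
  have hsub : Ioc (0:ℝ) (n:ℝ) ⊆ Ioi 0 := Ioc_subset_Ioi_self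
  have hfi : IntegrableOn (fun x => ‖f' x‖) (Ioc (0:ℝ) n) :=
    ((intervalIntegrable_iff_integrableOn_Ioc_of_le (by positivity : (0:ℝ) ≤ (n:ℝ))).1
      (h1 n (mem_Ici.2 (Nat.cast_nonneg n)))).norm
  calc ∫ x in Ioc (0:ℝ) n, ‖f' x‖
      ≤ ∫ x in Ioc (0:ℝ) n, g x := by
        apply setIntegral_mono_on hfi (hgint.mono_set hsub) measurableSet_Ioc
        intro x hx; exact hbd x (hsub hx)
    _ ≤ ∫ x in Ioi (0:ℝ), g x := by
        apply setIntegral_mono_set hgint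
        · exact (ae_restrict_iff' measurableSet_Ioi).2 (Eventually.of_forall hgnn)
        · exact Eventually.of_forall hsub

lemma aux_cs {U : Type*} [NormedAddCommGroup U] [NormedSpace ℝ U]
    (w : ℝ → ℝ) (hw_cont : Continuous w) (hw_ge1 : ∀ x ∈ Ici (0:ℝ), 1 ≤ w x)
    (hw_inv : IntegrableOn (fun s => (w s)⁻¹) (Ioi 0))
    (f' : ℝ → U) (hf' : IntegrableOn f' (Ioi 0))
    (h3 : IntegrableOn (fun y => w y * ‖f' y‖ ^ 2) (Ioi 0)) :
    ∫ s in Ioi (0:ℝ), ‖f' s‖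
      ≤ Real.sqrt (∫ s in Ioi (0:ℝ), (w s)⁻¹)
        * Real.sqrt (∫ x in Ioi (0:ℝ), w x * ‖f' x‖ ^ 2) := by
  set μ := volume.restrict (Ioi (0:ℝ)) with hμ
  set F : ℝ → ℝ := fun x => Real.sqrt ((w x)⁻¹) with hF
  set G : ℝ → ℝ := fun x => Real.sqrt (w x) * ‖f' x‖ with hG
  have hwpos : ∀ x ∈ Ioi (0:ℝ), (0:ℝ) < w x :=
    fun x hx => lt_of_lt_of_le one_pos (hw_ge1 x (mem_Ici.2 (le_of_lt (mem_Ioi.1 hx))))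
  have hFm : AEStronglyMeasurable F μ :=
    (Real.continuous_sqrt.measurable.comp hw_cont.measurable.inv).aestronglyMeasurable
  have hGm : AEStronglyMeasurable G μ :=
    ((Real.continuous_sqrt.comp hw_cont).aestronglyMeasurable.restrict).mul hf'.1.norm
  have hae : ∀ᵐ x ∂μ, x ∈ Ioi (0:ℝ) :=
    (ae_restrict_iff' measurableSet_Ioi).2 (Eventually.of_forall fun x hx => hx)
  have hF2 : Integrable (fun x => F x ^ 2) μ := by
    apply hw_inv.congr
    filter_upwards [hae] with x hx
    rw [hF]; simp only
    rw [Real.sq_sqrt (inv_nonneg.2 (hwpos x hx).le)]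
  have hG2 : Integrable (fun x => G x ^ 2) μ := by
    apply h3.congr
    filter_upwards [hae] with x hx
    rw [hG]; simp only
    rw [mul_pow, Real.sq_sqrt (hwpos x hx).le]
  have hFL : MemLp F 2 μ := (memLp_two_iff_integrable_sq hFm).2 hF2
  have hGL : MemLp G 2 μ := (memLp_two_iff_integrable_sq hGm).2 hG2
  have hpq : (2:ℝ).HolderConjugate 2 := Real.HolderConjugate.two_two
  have h2 : ENNReal.ofReal (2:ℝ) = 2 := by norm_num
  have key := integral_mul_le_Lp_mul_Lq_of_nonneg hpq
    (Eventually.of_forall fun x => Real.sqrt_nonneg _ : 0 ≤ᵐ[μ] F)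
    (Eventually.of_forall fun x => mul_nonneg (Real.sqrt_nonneg _) (norm_nonneg _) : 0 ≤ᵐ[μ] G)
    (h2 ▸ hFL) (h2 ▸ hGL)
  have hFG : ∫ x, F x * G x ∂μ = ∫ s in Ioi (0:ℝ), ‖f' s‖ := by
    apply integral_congr_ae
    filter_upwards [hae] with x hx
    have hwx := hwpos x hx
    rw [hF, hG]; simp only
    rw [← mul_assoc, ← Real.sqrt_mul (inv_nonneg.2 hwx.le), inv_mul_cancel₀ (ne_of_gt hwx),
      Real.sqrt_one, one_mul]
  have hFint : ∫ x, F x ^ (2:ℝ) ∂μ = ∫ s in Ioi (0:ℝ), (w s)⁻¹ := by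
    apply integral_congr_ae
    filter_upwards [hae] with x hx
    rw [hF]; simp only
    rw [show ((2:ℝ) = ((2:ℕ):ℝ)) by norm_num, Real.rpow_natCast,
      Real.sq_sqrt (inv_nonneg.2 (hwpos x hx).le)]
  have hGint : ∫ x, G x ^ (2:ℝ) ∂μ = ∫ x in Ioi (0:ℝ), w x * ‖f' x‖ ^ 2 := by
    apply integral_congr_ae
    filter_upwards [hae] with x hx
    rw [hG]; simp only
    rw [show ((2:ℝ) = ((2:ℕ):ℝ)) by norm_num, Real.rpow_natCast, mul_pow,
      Real.sq_sqrt (hwpos x hx).le]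
  rw [hFG, hFint, hGint] at key
  calc ∫ s in Ioi (0:ℝ), ‖f' s‖
      ≤ (∫ s in Ioi (0:ℝ), (w s)⁻¹) ^ ((1:ℝ)/2) * (∫ x in Ioi (0:ℝ), w x * ‖f' x‖ ^ 2) ^ ((1:ℝ)/2) := key
    _ = _ := by rw [← Real.sqrt_eq_rpow, ← Real.sqrt_eq_rpow]

/-- `δ_∞ : H_w → U`, `h ↦ lim_{t→∞} h(t)`, is the pointwise limit of the
evaluations `δ_t` (the limit exists and equals `h 0 + ∫₀^∞ h'`), it is bounded with
`‖δ_∞ h‖² ≤ C ‖h‖²_w` for `C = 1 + ∫₀^∞ w(s)⁻¹ ds`, and this bound is attained (so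
`‖δ_∞‖²_op = C`): equality holds for `f_u = (1 + ∫₀^{·} w⁻¹) • u`. -/
theorem stmt_15 {U : Type*} [NormedAddCommGroup U] [InnerProductSpace ℝ U]
    [CompleteSpace U] [SecondCountableTopology U]
    (w : ℝ → ℝ) (hw_cont : Continuous w) (hw_mono : MonotoneOn w (Ici 0))
    (hw0 : w 0 = 1) (hw_diff : Differentiable ℝ w)
    (hw_inv : IntegrableOn (fun s => (w s)⁻¹) (Ioi 0))
    (α : ℝ) (hαpos : 0 < α) (hα : ∀ x ≥ (0:ℝ), α * w x ≤ deriv w x) :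
    -- δ_∞ is the pointwise limit at infinity of the evaluation maps
    (∀ f f' : ℝ → U, MemHw w f f' →
      Tendsto f atTop (nhds (f 0 + ∫ s in Ioi (0:ℝ), f' s))) ∧
    -- boundedness: ‖δ_∞ f‖² ≤ (1 + ∫₀^∞ w⁻¹) ‖f‖²_w
    (∀ f f' : ℝ → U, MemHw w f f' →
      ‖f 0 + ∫ s in Ioi (0:ℝ), f' s‖ ^ 2
        ≤ (1 + ∫ s in Ioi (0:ℝ), (w s)⁻¹)
          * (‖f 0‖ ^ 2 + ∫ x in Ioi (0:ℝ), w x * ‖f' x‖ ^ 2)) ∧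
    -- the bound is sharp: with f = (1 + ∫₀^{·} w⁻¹) • u equality holds,
    -- hence ‖δ_∞‖²_op = 1 + ∫₀^∞ w⁻¹
    (∀ u : U,
      MemHw w (fun x => (1 + ∫ s in (0:ℝ)..x, (w s)⁻¹) • u) (fun x => (w x)⁻¹ • u) ∧
      ‖(fun x : ℝ => (1 + ∫ s in (0:ℝ)..x, (w s)⁻¹) • u) 0
            + ∫ s in Ioi (0:ℝ), (w s)⁻¹ • u‖ ^ 2
        = (1 + ∫ s in Ioi (0:ℝ), (w s)⁻¹)
          * (‖(fun x : ℝ => (1 + ∫ s in (0:ℝ)..x, (w s)⁻¹) • u) 0‖ ^ 2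
              + ∫ x in Ioi (0:ℝ), w x * ‖(w x)⁻¹ • u‖ ^ 2)) := by
  have hw_ge1 : ∀ x ∈ Ici (0:ℝ), 1 ≤ w x := by
    intro x hx
    have := hw_mono (self_mem_Ici) hx (mem_Ici.1 hx)
    rwa [hw0] at this
  have hwpos : ∀ x ∈ Ici (0:ℝ), (0:ℝ) < w x :=
    fun x hx => lt_of_lt_of_le one_pos (hw_ge1 x hx)
  have hC1 : (0:ℝ) ≤ ∫ s in Ioi (0:ℝ), (w s)⁻¹ :=
    setIntegral_nonneg measurableSet_Ioi
      (fun x hx => inv_nonneg.2 (hwpos x (mem_Ici.2 (le_of_lt (mem_Ioi.1 hx)))).le)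
  refine ⟨?_, ?_, ?_⟩
  · -- Part 1
    rintro f f' hf
    have hint := aux_int w hw_ge1 hw_inv f f' hf
    obtain ⟨h1, h2, h3⟩ := hf
    have htend := intervalIntegral_tendsto_integral_Ioi 0 hint tendsto_id
    refine Tendsto.congr' ?_ (tendsto_const_nhds.add htend)
    filter_upwards [eventually_ge_atTop (0:ℝ)] with y hy
    exact (h2 y hy).symm
  · -- Part 2
    rintro f f' hf
    have hint := aux_int w hw_ge1 hw_inv f f' hf
    have hcs := aux_cs w hw_cont hw_ge1 hw_inv f' hint hf.2.2
    set C := ∫ s in Ioi (0:ℝ), (w s)⁻¹ with hC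
    set I := ∫ x in Ioi (0:ℝ), w x * ‖f' x‖ ^ 2 with hI
    have hInn : (0:ℝ) ≤ I := setIntegral_nonneg measurableSet_Ioi
      (fun x hx => mul_nonneg (hwpos x (mem_Ici.2 (le_of_lt (mem_Ioi.1 hx)))).le (sq_nonneg _))
    have hb2 : Real.sqrt C ^ 2 = C := Real.sq_sqrt hC1
    have hc2 : Real.sqrt I ^ 2 = I := Real.sq_sqrt hInn
    have h1 : ‖f 0 + ∫ s in Ioi (0:ℝ), f' s‖ ≤ ‖f 0‖ + Real.sqrt C * Real.sqrt I := by
      refine (norm_add_le _ _).trans ?_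
      have := norm_integral_le_integral_norm (μ := volume.restrict (Ioi (0:ℝ))) f'
      linarith
    have hLnn : (0:ℝ) ≤ ‖f 0 + ∫ s in Ioi (0:ℝ), f' s‖ := norm_nonneg _
    have hsq := pow_le_pow_left₀ hLnn h1 2
    nlinarith [sq_nonneg (Real.sqrt C * ‖f 0‖ - Real.sqrt I), Real.sqrt_nonneg C,
      Real.sqrt_nonneg I, norm_nonneg (f 0)]
  · -- Part 3
    intro u
    have hci : ∀ y ∈ Ici (0:ℝ), IntervalIntegrable (fun x => (w x)⁻¹ • u) volume 0 y := by
      intro y hy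
      apply ContinuousOn.intervalIntegrable
      rw [uIcc_of_le (mem_Ici.1 hy)]
      exact ((hw_cont.continuousOn).inv₀
        (fun x hx => ne_of_gt (hwpos x hx.1))).smul continuousOn_const
    refine ⟨⟨hci, ?_, ?_⟩, ?_⟩
    · intro y hy
      simp only [intervalIntegral.integral_same, add_zero,
        intervalIntegral.integral_smul_const]
      rw [add_smul, one_smul]
    · have heq : EqOn (fun y => w y * ‖(w y)⁻¹ • u‖ ^ 2)
          (fun y => (w y)⁻¹ * ‖u‖ ^ 2) (Ioi 0) := by
        intro y hy
        have hwy := hwpos y (mem_Ici.2 (le_of_lt (mem_Ioi.1 hy)))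
        simp only [norm_smul, Real.norm_eq_abs, abs_of_nonneg (inv_nonneg.2 hwy.le),
          mul_pow]
        field_simp
      exact (IntegrableOn.congr_fun (hw_inv.mul_const _) heq.symm measurableSet_Ioi)
    · have hA : ∫ s in Ioi (0:ℝ), (w s)⁻¹ • u = (∫ s in Ioi (0:ℝ), (w s)⁻¹) • u :=
        integral_smul_const _ u
      have hB : ∫ x in Ioi (0:ℝ), w x * ‖(w x)⁻¹ • u‖ ^ 2
          = (∫ s in Ioi (0:ℝ), (w s)⁻¹) * ‖u‖ ^ 2 := by
        rw [← integral_mul_const]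
        apply setIntegral_congr_fun measurableSet_Ioi
        intro y hy
        have hwy := hwpos y (mem_Ici.2 (le_of_lt (mem_Ioi.1 hy)))
        simp only [norm_smul, Real.norm_eq_abs, abs_of_nonneg (inv_nonneg.2 hwy.le),
          mul_pow]
        field_simp
      simp only [intervalIntegral.integral_same, add_zero, one_smul, hA, hB]
      rw [show u + (∫ (s : ℝ) in Ioi 0, (w s)⁻¹) • u = (1 + ∫ (s : ℝ) in Ioi 0, (w s)⁻¹) • u by rw [add_smul, one_smul], norm_smul, Real.norm_eq_abs, abs_of_nonneg (by linarith), mul_pow]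
      ring
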